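/- arXiv:1703.01279 — 4 statements merged into one kernel-verified Lean document; each statement's English description precedes it below -/
import Mathlib

section
/- Alzer's inequality: for every integer N ≥ 2 and every real x > 0, e^{−x} · Σ_{k=0}^{N−1} x^k / k! < 1 − (1 − e^{−c·x})^N, where c = (N!)^{−1/N}. -/
open Real Finset Filter Set

namespace AlzerAux

noncomputable def S (N : ℕ) (x : ℝ) : ℝ := ∑ k ∈ Finset.range N, x ^ k / (Nat.factorial k : ℝ)
noncomputable def F (N : ℕ) (x : ℝ) : ℝ := 1 - Real.exp (-x) * S N x
noncomputable def G (N : ℕ) (c x : ℝ) : ℝ := (1 - Real.exp (-(c * x))) ^ N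
noncomputable def Fd (m : ℕ) (x : ℝ) : ℝ := x ^ m * Real.exp (-x) / (Nat.factorial m : ℝ)
noncomputable def Gd (N m : ℕ) (c x : ℝ) : ℝ :=
  (N : ℝ) * c * Real.exp (-(c * x)) * (1 - Real.exp (-(c * x))) ^ m
noncomputable def L (N m : ℕ) (c x : ℝ) : ℝ :=
  (m : ℝ) * Real.log x - x - Real.log (Nat.factorial m : ℝ)
    - (Real.log ((N : ℝ) * c) - c * x + (m : ℝ) * Real.log (1 - Real.exp (-(c * x))))
noncomputable def psi (t : ℝ) : ℝ := t⁻¹ - (Real.exp t - 1)⁻¹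
noncomputable def Ld (m : ℕ) (c x : ℝ) : ℝ := (m : ℝ) * c * psi (c * x) - (1 - c)

lemma exp_neg_lt_one {c x : ℝ} (hc : 0 < c) (hx : 0 < x) : Real.exp (-(c * x)) < 1 :=
  Real.exp_lt_one_iff.2 (by nlinarith)

lemma one_sub_exp_pos {c x : ℝ} (hc : 0 < c) (hx : 0 < x) : 0 < 1 - Real.exp (-(c * x)) :=
  sub_pos.2 (exp_neg_lt_one hc hx)

lemma Fd_pos {m : ℕ} {x : ℝ} (hx : 0 < x) : 0 < Fd m x := by
  unfold Fd; positivity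

lemma Gd_pos {N m : ℕ} {c x : ℝ} (hN : 0 < N) (hc : 0 < c) (hx : 0 < x) : 0 < Gd N m c x := by
  have h1 := one_sub_exp_pos hc hx
  unfold Gd
  have : (0:ℝ) < N := by exact_mod_cast hN
  positivity

lemma hasDerivAt_S (m : ℕ) (x : ℝ) : HasDerivAt (S (m + 1)) (S m x) x := by
  have h : HasDerivAt (S (m + 1))
      (∑ k ∈ Finset.range (m + 1), (k : ℝ) * x ^ (k - 1) / (Nat.factorial k : ℝ)) x := by
    apply HasDerivAt.fun_sum
    intro k _
    exact (hasDerivAt_pow k x).div_const _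
  convert h using 1
  rw [Finset.sum_range_succ']
  simp only [Nat.cast_zero, zero_mul, zero_div, add_zero]
  unfold S
  apply Finset.sum_congr rfl
  intro k _
  have hfact : (Nat.factorial (k + 1) : ℝ) = (k + 1) * Nat.factorial k := by
    rw [Nat.factorial_succ]; push_cast; ring
  have hk : (Nat.factorial k : ℝ) ≠ 0 := by positivity
  rw [hfact]
  push_cast
  field_simp

lemma hasDerivAt_F (N m : ℕ) (hm : N = m + 1) (x : ℝ) : HasDerivAt (F N) (Fd m x) x := by
  subst hm
  have hexp : HasDerivAt (fun y : ℝ => Real.exp (-y)) (-Real.exp (-x)) x := by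
    have := (Real.hasDerivAt_exp (-x)).comp x (hasDerivAt_neg x); simp only [mul_neg, mul_one] at this; exact this
  have h := (hexp.mul (hasDerivAt_S m x)).const_sub 1
  refine h.congr_deriv ?_
  have hsum : S (m + 1) x - S m x = x ^ m / (Nat.factorial m : ℝ) := by
    unfold S; rw [Finset.sum_range_succ]; ring
  have h2 : -(-Real.exp (-x) * S (m+1) x + Real.exp (-x) * S m x)
      = Real.exp (-x) * (S (m+1) x - S m x) := by ring
  rw [h2, hsum]; unfold Fd; ring

lemma hasDerivAt_inner (c x : ℝ) :
    HasDerivAt (fun y : ℝ => 1 - Real.exp (-(c * y))) (c * Real.exp (-(c * x))) x := by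
  have h1 : HasDerivAt (fun y : ℝ => -(c * y)) (-c) x := by
    have := ((hasDerivAt_id x).const_mul c).neg; simp only [mul_one] at this; exact this
  have h2 := (Real.hasDerivAt_exp (-(c * x))).comp x h1
  have h3 := h2.const_sub 1
  refine h3.congr_deriv ?_
  ring

lemma hasDerivAt_G (N m : ℕ) (hm : N = m + 1) (c x : ℝ) :
    HasDerivAt (G N c) (Gd N m c x) x := by
  have h := (hasDerivAt_inner c x).pow N
  refine h.congr_deriv ?_
  unfold Gd
  rw [hm]
  push_cast
  ring_nf

lemma L_eq_log (N m : ℕ) (hm : N = m + 1) {c x : ℝ} (hc : 0 < c) (hx : 0 < x) :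
    L N m c x = Real.log (Fd m x) - Real.log (Gd N m c x) := by
  have h1 := one_sub_exp_pos hc hx
  have hNpos : (0:ℝ) < N := by rw [hm]; push_cast; positivity
  have hfact : (0:ℝ) < (Nat.factorial m : ℝ) := by positivity
  have hexp : (0:ℝ) < Real.exp (-x) := Real.exp_pos _
  have hexp2 : (0:ℝ) < Real.exp (-(c * x)) := Real.exp_pos _
  have hlogF : Real.log (Fd m x) = (m : ℝ) * Real.log x + (-x) - Real.log (Nat.factorial m : ℝ) := by
    unfold Fd
    rw [Real.log_div (by positivity) (by positivity), Real.log_mul (by positivity) (by positivity),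
      Real.log_pow, Real.log_exp]
    try push_cast
    try ring
  have hlogG : Real.log (Gd N m c x)
      = Real.log ((N : ℝ) * c) + (-(c * x)) + (m : ℝ) * Real.log (1 - Real.exp (-(c * x))) := by
    unfold Gd
    rw [Real.log_mul (by positivity) (by positivity), Real.log_mul (by positivity) (by positivity),
      Real.log_exp, Real.log_pow]
    try push_cast
    try ring
  rw [hlogF, hlogG]; unfold L; ring

lemma Fd_eq (N m : ℕ) (hm : N = m + 1) {c x : ℝ} (hc : 0 < c) (hx : 0 < x) :
    Fd m x = Real.exp (L N m c x) * Gd N m c x := by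
  have hF := Fd_pos (m := m) hx
  have hG := Gd_pos (N := N) (m := m) (by omega : 0 < N) hc hx
  rw [L_eq_log N m hm hc hx, Real.exp_sub, Real.exp_log hF, Real.exp_log hG]
  field_simp

lemma deriv_h (N m : ℕ) (hm : N = m + 1) (c x : ℝ) :
    deriv (fun y => F N y - G N c y) x = Fd m x - Gd N m c x :=
  ((hasDerivAt_F N m hm x).sub (hasDerivAt_G N m hm c x)).deriv

lemma deriv_h_sign (N m : ℕ) (hm : N = m + 1) {c x : ℝ} (hc : 0 < c) (hx : 0 < x) :
    deriv (fun y => F N y - G N c y) x = (Real.exp (L N m c x) - 1) * Gd N m c x := by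
  rw [deriv_h N m hm c x, Fd_eq N m hm hc hx]; ring

lemma cont_h (N m : ℕ) (hm : N = m + 1) (c : ℝ) (s : Set ℝ) :
    ContinuousOn (fun y => F N y - G N c y) s := fun y _ =>
  (((hasDerivAt_F N m hm y).sub (hasDerivAt_G N m hm c y)).continuousAt).continuousWithinAt

lemma hasDerivAt_L (N m : ℕ) {c x : ℝ} (hc : 0 < c) (hx : 0 < x) :
    HasDerivAt (L N m c) (Ld m c x) x := by
  have h1 := one_sub_exp_pos hc hx
  have hlog := (Real.hasDerivAt_log hx.ne').const_mul (m : ℝ)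
  have hid : HasDerivAt (fun y : ℝ => y) 1 x := hasDerivAt_id x
  have hcx : HasDerivAt (fun y : ℝ => c * y) c x := by simpa using hid.const_mul c
  have hlog2 : HasDerivAt (fun y => Real.log (1 - Real.exp (-(c * y))))
      (c * Real.exp (-(c * x)) * (1 - Real.exp (-(c * x)))⁻¹) x := by
    have := (Real.hasDerivAt_log h1.ne').comp x (hasDerivAt_inner c x)
    refine this.congr_deriv ?_
    ring
  have hall : HasDerivAt (L N m c)
      ((m : ℝ) * x⁻¹ - 1 - 0 - (0 - c + (m : ℝ) * (c * Real.exp (-(c * x)) * (1 - Real.exp (-(c * x)))⁻¹))) x := by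
    unfold L
    exact ((hlog.sub hid).sub (hasDerivAt_const x _)).sub
      (((hasDerivAt_const x _).sub hcx).add (hlog2.const_mul (m : ℝ)))
  convert hall using 1
  unfold Ld psi
  have hE : Real.exp (-(c * x)) = (Real.exp (c * x))⁻¹ := by rw [← Real.exp_neg]
  have hEpos : (0:ℝ) < Real.exp (c * x) := Real.exp_pos _
  have hE1 : (1:ℝ) < Real.exp (c * x) := by
    rw [← Real.exp_zero]; exact Real.exp_lt_exp.2 (by positivity)
  have hne : Real.exp (c * x) - 1 ≠ 0 := by linarith
  rw [hE] at *
  field_simp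
  ring
end AlzerAux

namespace AlzerAux

lemma hasDerivAt_psi {t : ℝ} (ht : 0 < t) :
    HasDerivAt psi (-(t ^ 2)⁻¹ - -Real.exp t / (Real.exp t - 1) ^ 2) t := by
  have hE1 : (1:ℝ) < Real.exp t := by
    rw [← Real.exp_zero]; exact Real.exp_lt_exp.2 ht
  have hne : Real.exp t - 1 ≠ 0 := by linarith
  exact (hasDerivAt_inv ht.ne').sub (((Real.hasDerivAt_exp t).sub_const 1).inv hne)

lemma psi_deriv_neg {t : ℝ} (ht : 0 < t) :
    -(t ^ 2)⁻¹ - -Real.exp t / (Real.exp t - 1) ^ 2 < 0 := by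
  have hs : 0 < Real.exp (t / 2) := Real.exp_pos _
  have hsinh : t / 2 < Real.sinh (t / 2) := (Real.self_lt_sinh_iff).2 (by linarith)
  have hsq : Real.exp (t / 2) * Real.exp (t / 2) = Real.exp t := by
    rw [← Real.exp_add]; ring_nf
  have hsinh_eq : Real.sinh (t / 2) = (Real.exp (t / 2) - (Real.exp (t / 2))⁻¹) / 2 := by
    rw [Real.sinh_eq, Real.exp_neg]
  have hinv : Real.exp (t / 2) * (Real.exp (t / 2))⁻¹ = 1 := mul_inv_cancel₀ hs.ne'
  -- t * exp(t/2) < exp t - 1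
  have key : t * Real.exp (t / 2) < Real.exp t - 1 := by
    have h2 : t < Real.exp (t / 2) - (Real.exp (t / 2))⁻¹ := by
      rw [hsinh_eq] at hsinh; linarith
    calc t * Real.exp (t / 2) < (Real.exp (t / 2) - (Real.exp (t / 2))⁻¹) * Real.exp (t / 2) := by
          apply mul_lt_mul_of_pos_right h2 hs
      _ = Real.exp t - 1 := by rw [sub_mul, hsq]; rw [inv_mul_eq_div, div_self hs.ne']
  have hE1 : (1:ℝ) < Real.exp t := by
    nlinarith [Real.exp_pos t]
  have hkey2 : t ^ 2 * Real.exp t < (Real.exp t - 1) ^ 2 := by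
    have htE : 0 < t * Real.exp (t / 2) := by positivity
    nlinarith [sq_nonneg (Real.exp t - 1 - t * Real.exp (t/2))]
  have h3 : Real.exp t / (Real.exp t - 1) ^ 2 < (t ^ 2)⁻¹ := by
    rw [div_lt_iff₀ (by nlinarith), inv_mul_eq_div, lt_div_iff₀ (by positivity)]
    nlinarith
  have h4 : -Real.exp t / (Real.exp t - 1) ^ 2 = -(Real.exp t / (Real.exp t - 1) ^ 2) := by ring
  rw [h4]
  linarith

lemma psi_strictAnti : StrictAntiOn psi (Set.Ioi (0:ℝ)) := by
  apply strictAntiOn_of_deriv_neg (convex_Ioi 0)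
  · exact fun t ht => (hasDerivAt_psi ht).continuousAt.continuousWithinAt
  · intro t ht
    rw [interior_Ioi] at ht
    rw [(hasDerivAt_psi ht).deriv]
    exact psi_deriv_neg ht

lemma Ld_strictAnti {m : ℕ} {c : ℝ} (hm : 1 ≤ m) (hc : 0 < c) :
    StrictAntiOn (Ld m c) (Set.Ioi (0:ℝ)) := by
  intro x hx y hy hxy
  unfold Ld
  have hx' : (0:ℝ) < x := hx
  have hy' : (0:ℝ) < y := hy
  have h1 : psi (c * y) < psi (c * x) :=
    psi_strictAnti (Set.mem_Ioi.2 (mul_pos hc hx')) (Set.mem_Ioi.2 (mul_pos hc hy'))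
      (mul_lt_mul_of_pos_left hxy hc)
  have hmc : (0:ℝ) < (m : ℝ) * c := by
    have : (1:ℝ) ≤ (m:ℝ) := by exact_mod_cast hm
    nlinarith
  nlinarith

end AlzerAux

namespace AlzerAux

lemma L_tendsto_zero (N m : ℕ) (hm : N = m + 1) {c : ℝ} (hc : 0 < c)
    (hlogc : Real.log c = -(1 / (N:ℝ)) * Real.log (Nat.factorial N : ℝ)) :
    Tendsto (L N m c) (nhdsWithin 0 (Set.Ioi 0)) (nhds 0) := by
  have hNpos : (0:ℝ) < (N:ℝ) := by rw [hm]; push_cast; positivity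
  -- slope limit
  have hslope : Tendsto (fun x => (1 - Real.exp (-(c * x))) / x)
      (nhdsWithin 0 (Set.Ioi 0)) (nhds c) := by
    have hd : HasDerivAt (fun y : ℝ => 1 - Real.exp (-(c * y))) c 0 := by
      have := hasDerivAt_inner c 0
      simpa using this
    have := hasDerivAt_iff_tendsto_slope.1 hd
    have h2 : Tendsto (slope (fun y : ℝ => 1 - Real.exp (-(c * y))) 0)
        (nhdsWithin 0 (Set.Ioi 0)) (nhds c) :=
      this.mono_left (nhdsWithin_mono 0 (fun y hy => by simp at hy ⊢; exact ne_of_gt hy))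
    apply h2.congr'
    filter_upwards [self_mem_nhdsWithin] with x hx
    have hx0 : (x:ℝ) ≠ 0 := ne_of_gt hx
    simp only [slope_def_field, mul_zero, neg_zero, Real.exp_zero, sub_self, sub_zero]
  have hlog1 : Tendsto (fun x => Real.log ((1 - Real.exp (-(c * x))) / x))
      (nhdsWithin 0 (Set.Ioi 0)) (nhds (Real.log c)) :=
    ((Real.continuousAt_log hc.ne').tendsto).comp hslope
  have hlin : Tendsto (fun x : ℝ => c * x - x) (nhdsWithin 0 (Set.Ioi 0)) (nhds 0) := by
    have : Continuous (fun x : ℝ => c * x - x) := by continuity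
    have h0 := this.tendsto 0
    simp at h0
    exact h0.mono_left nhdsWithin_le_nhds
  have hcomb : Tendsto (fun x => -(m:ℝ) * Real.log ((1 - Real.exp (-(c * x))) / x)
      + (c * x - x) - Real.log (Nat.factorial m : ℝ) - Real.log ((N:ℝ) * c))
      (nhdsWithin 0 (Set.Ioi 0))
      (nhds (-(m:ℝ) * Real.log c + 0 - Real.log (Nat.factorial m : ℝ) - Real.log ((N:ℝ) * c))) := by
    exact (((hlog1.const_mul (-(m:ℝ))).add hlin).sub_const _).sub_const _
  have hval : -(m:ℝ) * Real.log c + 0 - Real.log (Nat.factorial m : ℝ) - Real.log ((N:ℝ) * c) = 0 := by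
    have hNfact : (Nat.factorial N : ℝ) = (N : ℝ) * (Nat.factorial m : ℝ) := by
      rw [hm, Nat.factorial_succ]; push_cast; ring
    have hfm : (0:ℝ) < (Nat.factorial m : ℝ) := by positivity
    rw [Real.log_mul hNpos.ne' hc.ne'] 
    rw [hNfact, Real.log_mul hNpos.ne' hfm.ne'] at hlogc
    have hmN : (m:ℝ) = (N:ℝ) - 1 := by rw [hm]; push_cast; ring
    rw [hmN, hlogc]
    field_simp
    ring
  rw [hval] at hcomb
  apply hcomb.congr'
  filter_upwards [self_mem_nhdsWithin] with x hx
  have hx0 : (0:ℝ) < x := hx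
  have h1 := one_sub_exp_pos hc hx0
  unfold L
  rw [Real.log_div h1.ne' hx0.ne']
  ring

lemma h_tendsto_zero (N : ℕ) {c : ℝ} (hc : 0 < c) :
    Tendsto (fun x => F N x - G N c x) atTop (nhds 0) := by
  have hF : Tendsto (F N) atTop (nhds 1) := by
    have hsum : Tendsto (fun x => Real.exp (-x) * S N x) atTop (nhds 0) := by
      have : Tendsto (fun x => ∑ k ∈ Finset.range N, x ^ k * Real.exp (-x) / (Nat.factorial k : ℝ))
          atTop (nhds 0) := by
        have h0 : (0:ℝ) = ∑ k ∈ Finset.range N, 0 := by simp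
        rw [h0]
        apply tendsto_finset_sum
        intro k _
        simpa using (tendsto_pow_mul_exp_neg_atTop_nhds_zero k).div_const ((Nat.factorial k : ℝ))
      apply this.congr
      intro x
      unfold S
      rw [Finset.mul_sum]
      apply Finset.sum_congr rfl
      intro k _
      ring
    have := (tendsto_const_nhds : Tendsto (fun _ : ℝ => (1:ℝ)) atTop (nhds 1)).sub hsum
    simp only [sub_zero] at this; exact this
  have hG : Tendsto (fun x => G N c x) atTop (nhds 1) := by
    have hexp : Tendsto (fun x : ℝ => Real.exp (-(c * x))) atTop (nhds 0) := by
      have h1 : Tendsto (fun x : ℝ => c * x) atTop atTop :=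
        Tendsto.const_mul_atTop hc tendsto_id
      have := Real.tendsto_exp_neg_atTop_nhds_zero.comp h1
      exact this
    have := ((tendsto_const_nhds : Tendsto (fun _ : ℝ => (1:ℝ)) atTop (nhds 1)).sub hexp).pow N
    simpa [G] using this
  have := hF.sub hG
  simpa using this

end AlzerAux

namespace AlzerAux

/-- If `Ld` at `x` is positive, then `L` at `x` is positive. -/
lemma L_pos_of_Ld_pos (N m : ℕ) (hm : N = m + 1) (hm1 : 1 ≤ m) {c : ℝ} (hc : 0 < c)
    (hlogc : Real.log c = -(1 / (N:ℝ)) * Real.log (Nat.factorial N : ℝ))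
    {x : ℝ} (hx : 0 < x) (hLd : 0 < Ld m c x) : 0 < L N m c x := by
  have hmono : StrictMonoOn (L N m c) (Set.Ioc 0 x) := by
    apply strictMonoOn_of_deriv_pos (convex_Ioc 0 x)
    · exact fun y hy => (hasDerivAt_L N m hc hy.1).continuousAt.continuousWithinAt
    · intro y hy
      rw [interior_Ioc] at hy
      rw [(hasDerivAt_L N m hc hy.1).deriv]
      calc (0:ℝ) < Ld m c x := hLd
        _ < Ld m c y := Ld_strictAnti hm1 hc hy.1 (lt_trans hy.1 hy.2) hy.2
  have hhalf_mem : x / 2 ∈ Set.Ioc 0 x := ⟨by linarith, by linarith⟩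
  have hx_mem : x ∈ Set.Ioc 0 x := ⟨hx, le_refl x⟩
  have hge : 0 ≤ L N m c (x / 2) := by
    apply le_of_tendsto (L_tendsto_zero N m hm hc hlogc)
    filter_upwards [Ioo_mem_nhdsGT_of_mem (Set.left_mem_Ico.2 (by linarith : (0:ℝ) < x/2))] with y hy
    exact le_of_lt (hmono ⟨hy.1, by linarith [hy.2]⟩ hhalf_mem hy.2)
  calc (0:ℝ) ≤ L N m c (x/2) := hge
    _ < L N m c x := hmono hhalf_mem hx_mem (by linarith)

/-- If `L x ≤ 0` then `L` is strictly decreasing after `x`. -/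
lemma L_lt_after (N m : ℕ) (hm : N = m + 1) (hm1 : 1 ≤ m) {c : ℝ} (hc : 0 < c)
    (hlogc : Real.log c = -(1 / (N:ℝ)) * Real.log (Nat.factorial N : ℝ))
    {x : ℝ} (hx : 0 < x) (hLx : L N m c x ≤ 0) :
    ∀ y, x < y → L N m c y < L N m c x := by
  have hLd : Ld m c x ≤ 0 := by
    by_contra hcon
    push_neg at hcon
    exact absurd (L_pos_of_Ld_pos N m hm hm1 hc hlogc hx hcon) (not_lt.2 hLx)
  have hanti : StrictAntiOn (L N m c) (Set.Ici x) := by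
    apply strictAntiOn_of_deriv_neg (convex_Ici x)
    · exact fun y hy => (hasDerivAt_L N m hc (lt_of_lt_of_le hx hy)).continuousAt.continuousWithinAt
    · intro y hy
      rw [interior_Ici] at hy
      rw [(hasDerivAt_L N m hc (lt_trans hx hy)).deriv]
      calc Ld m c y < Ld m c x := Ld_strictAnti hm1 hc hx (lt_trans hx hy) hy
        _ ≤ 0 := hLd
  intro y hy
  exact hanti (Set.self_mem_Ici) (le_of_lt hy) hy

lemma F0 (N m : ℕ) (hm : N = m + 1) : F N 0 = 0 := by
  subst hm
  unfold F S
  rw [Finset.sum_range_succ']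
  simp

lemma G0 (N m : ℕ) (hm : N = m + 1) (c : ℝ) : G N c 0 = 0 := by
  subst hm
  unfold G
  simp

theorem main (N : ℕ) (hN : 2 ≤ N) {c : ℝ} (hc : 0 < c)
    (hlogc : Real.log c = -(1 / (N:ℝ)) * Real.log (Nat.factorial N : ℝ))
    {x : ℝ} (hx : 0 < x) : G N c x < F N x := by
  obtain ⟨m, hm⟩ : ∃ m, N = m + 1 := ⟨N - 1, by omega⟩
  have hm1 : 1 ≤ m := by omega
  have hN0 : 0 < N := by omega
  rw [show G N c x < F N x ↔ 0 < F N x - G N c x by constructor <;> intro <;> linarith]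
  by_cases hL : 0 < L N m c x
  · -- increasing up to x
    have hkey : ∀ y ∈ Set.Ioo 0 x, 0 < L N m c y := by
      intro y hy
      by_contra hcon
      push_neg at hcon
      have := L_lt_after N m hm hm1 hc hlogc hy.1 hcon x hy.2
      linarith
    have hmono : StrictMonoOn (fun y => F N y - G N c y) (Set.Icc 0 x) := by
      apply strictMonoOn_of_deriv_pos (convex_Icc 0 x) (cont_h N m hm c _)
      intro y hy
      rw [interior_Icc] at hy
      rw [deriv_h_sign N m hm hc hy.1]
      apply mul_pos
      · have : (1:ℝ) < Real.exp (L N m c y) := Real.one_lt_exp_iff.2 (hkey y hy)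
        linarith
      · exact Gd_pos hN0 hc hy.1
    have := hmono (Set.left_mem_Icc.2 (le_of_lt hx)) ⟨le_of_lt hx, le_refl x⟩ hx
    simp only at this
    rw [F0 N m hm, G0 N m hm c] at this
    linarith
  · push_neg at hL
    have hneg : ∀ y, x < y → L N m c y < 0 := fun y hy =>
      lt_of_lt_of_le (L_lt_after N m hm hm1 hc hlogc hx hL y hy) hL
    have hanti : StrictAntiOn (fun y => F N y - G N c y) (Set.Ici x) := by
      apply strictAntiOn_of_deriv_neg (convex_Ici x) (cont_h N m hm c _)
      intro y hy
      rw [interior_Ici] at hy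
      rw [deriv_h_sign N m hm hc (lt_trans hx hy)]
      apply mul_neg_of_neg_of_pos
      · have : Real.exp (L N m c y) < 1 := Real.exp_lt_one_iff.2 (hneg y hy)
        linarith
      · exact Gd_pos hN0 hc (lt_trans hx hy)
    have h1 : 0 ≤ F N (x+1) - G N c (x+1) := by
      apply le_of_tendsto (h_tendsto_zero N hc)
      filter_upwards [eventually_ge_atTop (x+1)] with z hz
      exact hanti.antitoneOn (Set.mem_Ici.2 (by linarith)) (Set.mem_Ici.2 (by linarith)) hz
    have h2 := hanti Set.self_mem_Ici (Set.mem_Ici.2 (by linarith) : x + 1 ∈ Set.Ici x) (lt_add_one x)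
    simp only at h1 h2
    linarith

end AlzerAux

/-- Alzer's inequality: for `N ≥ 2`, `x > 0`, with `c = (N!)^{−1/N}`,
`e^{−x} ∑_{k<N} x^k/k! < 1 − (1 − e^{−cx})^N`. -/
theorem alzer_inequality (N : ℕ) (hN : 2 ≤ N) (x : ℝ) (hx : 0 < x) :
    Real.exp (-x) * ∑ k ∈ Finset.range N, x ^ k / (Nat.factorial k : ℝ) <
      1 - (1 - Real.exp (-((Nat.factorial N : ℝ) ^ (-(1 / (N : ℝ))) * x))) ^ N := by
  set c : ℝ := (Nat.factorial N : ℝ) ^ (-(1 / (N : ℝ))) with hcdef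
  have hfact : (0:ℝ) < (Nat.factorial N : ℝ) := by positivity
  have hc : 0 < c := Real.rpow_pos_of_pos hfact _
  have hlogc : Real.log c = -(1 / (N:ℝ)) * Real.log (Nat.factorial N : ℝ) := by
    rw [hcdef, Real.log_rpow hfact]
  have := AlzerAux.main N hN hc hlogc hx
  unfold AlzerAux.G AlzerAux.F AlzerAux.S at this
  linarith
end

section
/- For real α > 2, s > 0, and a positive integer m, the improper integral ∫_0^∞ (1 − (1 + (s/m)·t^{−α})^{−m}) · t dt converges and equals ζ(m) · (s/m)^{2/α}, where ζ(m) = −Γ(m + 2/α) · Γ(−2/α) / (α · Γ(m)). -/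
open Real MeasureTheory Set

lemma betaIoo (a b : ℝ) (ha : 0 < a) (hb : 0 < b) :
    IntegrableOn (fun x : ℝ => x ^ (a - 1) * (1 - x) ^ (b - 1)) (Ioo 0 1) ∧
    ∫ x in Ioo (0:ℝ) 1, x ^ (a - 1) * (1 - x) ^ (b - 1) =
      Real.Gamma a * Real.Gamma b / Real.Gamma (a + b) := by
  set F : ℝ → ℂ := fun x => (x : ℂ) ^ ((a : ℂ) - 1) * (1 - (x : ℂ)) ^ ((b : ℂ) - 1) with hFdef
  have hF : IntervalIntegrable F volume 0 1 :=
    Complex.betaIntegral_convergent (by simpa using ha) (by simpa using hb)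
  have hEq : ∀ x ∈ Icc (0:ℝ) 1, F x = ((x ^ (a - 1) * (1 - x) ^ (b - 1) : ℝ) : ℂ) := by
    intro x hx
    simp only [hFdef]
    have h1 : (0:ℝ) ≤ x := hx.1
    have h2 : (0:ℝ) ≤ 1 - x := by linarith [hx.2]
    rw [show ((a:ℂ) - 1) = ((a - 1 : ℝ) : ℂ) by push_cast; ring,
      show ((b:ℂ) - 1) = ((b - 1 : ℝ) : ℂ) by push_cast; ring,
      show (1 - (x:ℂ)) = ((1 - x : ℝ) : ℂ) by push_cast; ring,
      ← Complex.ofReal_cpow h1, ← Complex.ofReal_cpow h2, ← Complex.ofReal_mul]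
  have hFIoc : IntegrableOn F (Ioc 0 1) := by
    rw [← intervalIntegrable_iff_integrableOn_Ioc_of_le (by norm_num : (0:ℝ) ≤ 1)]
    exact hF
  have hInt : IntegrableOn (fun x : ℝ => x ^ (a - 1) * (1 - x) ^ (b - 1)) (Ioo 0 1) := by
    have := (hFIoc.mono_set Ioo_subset_Ioc_self).re
    refine (integrableOn_congr_fun (fun x hx => ?_) measurableSet_Ioo).mp this
    rw [hEq x (Ioo_subset_Icc_self hx)]
    simp
  refine ⟨hInt, ?_⟩
  have hbeta : Complex.betaIntegral a b =
      ((∫ x in Ioo (0:ℝ) 1, x ^ (a - 1) * (1 - x) ^ (b - 1) : ℝ) : ℂ) := by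
    rw [Complex.betaIntegral]
    rw [show (∫ x : ℝ in (0)..1, (x : ℂ) ^ ((a:ℂ) - 1) * (1 - (x:ℂ)) ^ ((b:ℂ) - 1))
        = ∫ x : ℝ in (0)..1, F x from rfl]
    rw [intervalIntegral.integral_congr (g := fun x : ℝ =>
        ((x ^ (a - 1) * (1 - x) ^ (b - 1) : ℝ) : ℂ)) ?_]
    · rw [intervalIntegral.integral_ofReal, intervalIntegral.integral_of_le (by norm_num : (0:ℝ) ≤ 1),
        MeasureTheory.integral_Ioc_eq_integral_Ioo]
    · intro x hx
      exact hEq x (by rwa [uIcc_of_le (by norm_num : (0:ℝ) ≤ 1)] at hx)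
  have hG := Complex.Gamma_mul_Gamma_eq_betaIntegral
    (s := (a:ℂ)) (t := (b:ℂ)) (by simpa using ha) (by simpa using hb)
  rw [hbeta] at hG
  have : ((Real.Gamma a * Real.Gamma b : ℝ) : ℂ) =
      ((Real.Gamma (a + b) * ∫ x in Ioo (0:ℝ) 1, x ^ (a - 1) * (1 - x) ^ (b - 1) : ℝ) : ℂ) := by
    push_cast [← Complex.Gamma_ofReal]
    simpa using hG
  have hreal := Complex.ofReal_injective this
  have hpos : 0 < Real.Gamma (a + b) := Real.Gamma_pos_of_pos (by linarith)
  field_simp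
  linarith [hreal]
lemma betaIoi (a b : ℝ) (ha : 0 < a) (hb : 0 < b) :
    IntegrableOn (fun x : ℝ => x ^ (a - 1) * (1 + x) ^ (-(a + b))) (Ioi 0) ∧
    ∫ x in Ioi (0:ℝ), x ^ (a - 1) * (1 + x) ^ (-(a + b)) =
      Real.Gamma a * Real.Gamma b / Real.Gamma (a + b) := by
  set f : ℝ → ℝ := fun u => u / (1 - u) with hfdef
  set f' : ℝ → ℝ := fun u => ((1 - u) ^ 2)⁻¹ with hf'def
  set g : ℝ → ℝ := fun x => x ^ (a - 1) * (1 + x) ^ (-(a + b)) with hgdef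
  have hderiv : ∀ u ∈ Ioo (0:ℝ) 1, HasDerivWithinAt f (f' u) (Ioo 0 1) u := by
    intro u hu
    have hne : 1 - u ≠ 0 := by have := hu.2; intro h; simp only [sub_eq_zero] at h; linarith
    have h1 : HasDerivAt (fun u : ℝ => 1 - u) (-1) u := by
      simpa using ((hasDerivAt_id u).const_sub 1)
    have h := (hasDerivAt_id u).div h1 hne
    have heq : (1 * (1 - u) - id u * -1) / (1 - u) ^ 2 = f' u := by
      simp only [hf'def, id]; field_simp; ring
    rw [heq] at h
    exact h.hasDerivWithinAt
  have hinj : InjOn f (Ioo (0:ℝ) 1) := by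
    intro u hu v hv h
    have h1 : 1 - u ≠ 0 := by have := hu.2; intro hc; simp only [sub_eq_zero] at hc; linarith
    have h2 : 1 - v ≠ 0 := by have := hv.2; intro hc; simp only [sub_eq_zero] at hc; linarith
    simp only [hfdef] at h
    field_simp at h
    linarith
  have himg : f '' Ioo (0:ℝ) 1 = Ioi 0 := by
    ext x
    constructor
    · rintro ⟨u, hu, rfl⟩
      have hw : 0 < 1 - u := by linarith [hu.2]
      exact div_pos hu.1 hw
    · intro hx
      refine ⟨x / (1 + x), ⟨div_pos hx (by linarith [mem_Ioi.mp hx]), ?_⟩, ?_⟩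
      · rw [div_lt_one (by linarith [mem_Ioi.mp hx])]; linarith [mem_Ioi.mp hx]
      · have hx0 : (0:ℝ) < x := hx
        have h1x : (0:ℝ) < 1 + x := by linarith
        simp only [hfdef]
        rw [show 1 - x / (1 + x) = 1 / (1 + x) by field_simp; ring]
        field_simp
  have hpt : ∀ u ∈ Ioo (0:ℝ) 1, |f' u| • g (f u) = u ^ (a - 1) * (1 - u) ^ (b - 1) := by
    intro u hu
    have hu0 : (0:ℝ) < u := hu.1
    have hw : (0:ℝ) < 1 - u := by linarith [hu.2]
    have h1f : 1 + f u = (1 - u)⁻¹ := by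
      simp only [hfdef]; field_simp; ring
    simp only [hgdef, smul_eq_mul, hf'def, h1f]; simp only [hfdef]
    rw [abs_of_pos (by positivity)]
    rw [Real.div_rpow hu0.le hw.le, Real.inv_rpow hw.le, ← Real.rpow_neg hw.le, neg_neg]
    rw [← Real.rpow_natCast (1 - u) 2]
    rw [div_eq_mul_inv, ← Real.rpow_neg hw.le, ← Real.rpow_neg hw.le]
    rw [show ((1:ℝ) - u) ^ (-((2:ℕ):ℝ)) * (u ^ (a - 1) * (1 - u) ^ (-(a - 1)) * (1 - u) ^ (a + b))
        = u ^ (a - 1) * ((1 - u) ^ (-((2:ℕ):ℝ)) * (1 - u) ^ (-(a - 1)) * (1 - u) ^ (a + b)) by ring,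
      ← Real.rpow_add hw, ← Real.rpow_add hw]
    congr 1
    push_cast
    ring
  obtain ⟨hbint, hbval⟩ := betaIoo a b ha hb
  have hIntIff := integrableOn_image_iff_integrableOn_abs_deriv_smul
    measurableSet_Ioo hderiv hinj g
  rw [himg] at hIntIff
  have hInt : IntegrableOn g (Ioi 0) := by
    rw [hIntIff]
    exact (integrableOn_congr_fun hpt measurableSet_Ioo).mpr hbint
  refine ⟨hInt, ?_⟩
  have := integral_image_eq_integral_abs_deriv_smul measurableSet_Ioo hderiv hinj g
  rw [himg] at this
  rw [show (∫ x in Ioi (0:ℝ), x ^ (a - 1) * (1 + x) ^ (-(a + b))) = ∫ x in Ioi (0:ℝ), g x from rfl,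
    this, setIntegral_congr_fun measurableSet_Ioo hpt, hbval]

lemma I_int (δ : ℝ) (hδ0 : 0 < δ) (hδ1 : δ < 1) :
    ∀ m : ℕ, 0 < m →
    IntegrableOn (fun y : ℝ => (1 - (1 + y) ^ (-(m:ℝ))) * y ^ (-δ - 1)) (Ioi 0) ∧
    ∫ y in Ioi (0:ℝ), (1 - (1 + y) ^ (-(m:ℝ))) * y ^ (-δ - 1) =
      Real.Gamma (1 - δ) * Real.Gamma (m + δ) / (δ * Real.Gamma m) := by
  intro m hm
  induction m with
  | zero => exact absurd hm (by norm_num)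
  | succ n ih =>
    rcases Nat.eq_zero_or_pos n with hn0 | hn
    · subst hn0
      have hkey := betaIoi (1 - δ) δ (by linarith) hδ0
      have hpt : ∀ y ∈ Ioi (0:ℝ),
          y ^ (1 - δ - 1) * (1 + y) ^ (-(1 - δ + δ)) =
          (1 - (1 + y) ^ (-((0+1:ℕ):ℝ))) * y ^ (-δ - 1) := by
        intro y hy
        have hy0 : (0:ℝ) < y := hy
        have h1y : (0:ℝ) < 1 + y := by linarith
        rw [show (1:ℝ) - δ + δ = 1 by ring, show (((0+1:ℕ)):ℝ) = (1:ℝ) by norm_num,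
          Real.rpow_neg_one]
        rw [show (1:ℝ) - (1 + y)⁻¹ = y * (1 + y)⁻¹ by field_simp; ring]
        rw [show y ^ (1 - δ - 1) = y * y ^ (-δ - 1) by
          rw [show (1:ℝ) - δ - 1 = 1 + (-δ - 1) by ring, Real.rpow_add hy0, Real.rpow_one]]
        ring
      constructor
      · exact (integrableOn_congr_fun hpt measurableSet_Ioi).mp hkey.1
      · rw [← setIntegral_congr_fun measurableSet_Ioi hpt, hkey.2]
        rw [show (1:ℝ) - δ + δ = 1 by ring, Real.Gamma_one,
          show ((0+1:ℕ):ℝ) + δ = δ + 1 by push_cast; ring, Real.Gamma_add_one hδ0.ne',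
          show ((0+1:ℕ):ℝ) = (1:ℝ) by norm_num, Real.Gamma_one]
        field_simp
    · obtain ⟨ihInt, ihVal⟩ := ih hn
      have hn' : (0:ℝ) < (n:ℝ) := by exact_mod_cast hn
      have hkey := betaIoi (1 - δ) (n + δ) (by linarith) (by positivity)
      have hpt : ∀ y ∈ Ioi (0:ℝ),
          (1 - (1 + y) ^ (-((n+1:ℕ):ℝ))) * y ^ (-δ - 1) =
          (1 - (1 + y) ^ (-(n:ℝ))) * y ^ (-δ - 1) +
          y ^ (1 - δ - 1) * (1 + y) ^ (-(1 - δ + (n + δ))) := by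
        intro y hy
        have hy0 : (0:ℝ) < y := hy
        have h1y : (0:ℝ) < 1 + y := by linarith
        rw [show (1:ℝ) - δ + ((n:ℝ) + δ) = (n:ℝ) + 1 by ring,
          show (((n+1:ℕ)):ℝ) = (n:ℝ) + 1 by push_cast; ring]
        rw [show y ^ (1 - δ - 1) = y * y ^ (-δ - 1) by
          rw [show (1:ℝ) - δ - 1 = 1 + (-δ - 1) by ring, Real.rpow_add hy0, Real.rpow_one]]
        nth_rewrite 1 [show (1 + y) ^ (-(n:ℝ)) = (1 + y) ^ (-((n:ℝ)+1)) * (1 + y) by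
          rw [show -(n:ℝ) = -((n:ℝ)+1) + 1 by ring, Real.rpow_add h1y, Real.rpow_one]]
        ring
      constructor
      · exact (integrableOn_congr_fun hpt measurableSet_Ioi).mpr (ihInt.add hkey.1)
      · rw [setIntegral_congr_fun measurableSet_Ioi hpt,
          MeasureTheory.integral_add ihInt hkey.1, ihVal, hkey.2]
        rw [show (1:ℝ) - δ + ((n:ℝ) + δ) = (n:ℝ) + 1 by ring]
        rw [show (((n+1:ℕ)):ℝ) = (n:ℝ) + 1 by push_cast; ring]
        rw [show (n:ℝ) + 1 + δ = ((n:ℝ) + δ) + 1 by ring,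
          Real.Gamma_add_one (by positivity : ((n:ℝ) + δ) ≠ 0),
          Real.Gamma_add_one hn'.ne']
        have hΓn : 0 < Real.Gamma n := Real.Gamma_pos_of_pos hn'
        field_simp

/-- Interference functional under Nakagami-m fading, strongest association:
`∫_0^∞ (1 − (1 + (s/m) t^{−α})^{−m}) t dt = ζ(m) (s/m)^{2/α}` with
`ζ(m) = −Γ(m + 2/α)Γ(−2/α)/(αΓ(m))`. -/
theorem interference_integral_nakagami (α s : ℝ) (m : ℕ) (hα : 2 < α) (hs : 0 < s)
    (hm : 0 < m) :
    IntegrableOn (fun t : ℝ => (1 - ((1 + (s / m) * t ^ (-α)) ^ m)⁻¹) * t) (Ioi 0) ∧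
    ∫ t in Ioi (0:ℝ), (1 - ((1 + (s / m) * t ^ (-α)) ^ m)⁻¹) * t =
      (-(Real.Gamma ((m : ℝ) + 2 / α) * Real.Gamma (-(2 / α)) / (α * Real.Gamma m))) *
        (s / m) ^ (2 / α) := by
  have hα0 : (0:ℝ) < α := by linarith
  set δ : ℝ := 2 / α with hδdef
  have hδ0 : 0 < δ := by positivity
  have hδ1 : δ < 1 := by rw [hδdef, div_lt_one hα0]; linarith
  set c : ℝ := s / m with hcdef
  have hc : 0 < c := by
    have : (0:ℝ) < (m:ℝ) := by exact_mod_cast hm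
    positivity
  set b : ℝ := c ^ (1/α) with hbdef
  have hb : 0 < b := Real.rpow_pos_of_pos hc _
  obtain ⟨hI, hIval⟩ := I_int δ hδ0 hδ1 m hm
  set g : ℝ → ℝ := fun y => (1/α) * ((1 - (1 + y) ^ (-(m:ℝ))) * y ^ (-δ - 1)) with hgdef
  have hg_int : IntegrableOn g (Ioi 0) := hI.const_mul _
  set F : ℝ → ℝ := fun u => (1 - (1 + u ^ (-α)) ^ (-(m:ℝ))) * u with hFdef
  -- step B : rpow substitution
  have hp : (-α) ≠ 0 := neg_ne_zero.mpr hα0.ne'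
  have hpt : ∀ x ∈ Ioi (0:ℝ), (|(-α)| * x ^ ((-α) - 1)) • g (x ^ (-α)) = F x := by
    intro x hx
    have hx0 : (0:ℝ) < x := hx
    simp only [hgdef, hFdef, smul_eq_mul, abs_neg, abs_of_pos hα0]
    rw [← Real.rpow_mul hx0.le (-α) (-δ - 1)]
    rw [show (-α) * (-δ - 1) = α * δ + α by ring]
    have hαδ : α * δ = 2 := by rw [hδdef]; field_simp
    rw [hαδ]
    rw [show α * x ^ (-α - 1) * (1/α * ((1 - (1 + x ^ (-α)) ^ (-(m:ℝ))) * x ^ ((2:ℝ) + α)))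
        = (1 - (1 + x ^ (-α)) ^ (-(m:ℝ))) * (x ^ (-α - 1) * x ^ ((2:ℝ) + α)) * (α * (1/α)) by ring]
    rw [← Real.rpow_add hx0, show (-α - 1) + ((2:ℝ) + α) = 1 by ring, Real.rpow_one,
      mul_one_div_cancel hα0.ne', mul_one]
  have hFint : IntegrableOn F (Ioi 0) := by
    have := (integrableOn_Ioi_comp_rpow_iff g hp).mpr hg_int
    exact (integrableOn_congr_fun hpt measurableSet_Ioi).mp this
  have hFval : ∫ u in Ioi (0:ℝ), F u = (1/α) * (Real.Gamma (1 - δ) * Real.Gamma (m + δ) / (δ * Real.Gamma m)) := by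
    rw [← setIntegral_congr_fun measurableSet_Ioi hpt, integral_comp_rpow_Ioi g hp]
    rw [show (∫ y in Ioi (0:ℝ), g y) = ∫ y in Ioi (0:ℝ), (1/α) * ((1 - (1 + y) ^ (-(m:ℝ))) * y ^ (-δ - 1)) from rfl]
    rw [MeasureTheory.integral_const_mul, hIval]
  -- step A : scaling
  set f : ℝ → ℝ := fun t => (1 - ((1 + c * t ^ (-α)) ^ m)⁻¹) * t with hfdef
  have hscale : ∀ u ∈ Ioi (0:ℝ), f (b * u) = b * F u := by
    intro u hu
    have hu0 : (0:ℝ) < u := hu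
    have hbα : b ^ (-α) = c⁻¹ := by
      rw [hbdef, ← Real.rpow_mul hc.le, show (1/α) * (-α) = -1 by field_simp, Real.rpow_neg_one]
    have hbase : c * (b * u) ^ (-α) = u ^ (-α) := by
      rw [Real.mul_rpow hb.le hu0.le, hbα]
      field_simp
    have hpos : (0:ℝ) < 1 + u ^ (-α) := by positivity
    simp only [hfdef, hFdef, hbase]
    rw [← Real.rpow_natCast (1 + u ^ (-α)) m, ← Real.rpow_neg hpos.le]
    ring
  have hf_int : IntegrableOn f (Ioi 0) := by
    have h1 : IntegrableOn (fun u => f (b * u)) (Ioi 0) := by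
      refine (integrableOn_congr_fun hscale measurableSet_Ioi).mpr ?_
      exact hFint.const_mul b
    have := (integrableOn_Ioi_comp_mul_left_iff f 0 hb).mp h1
    rwa [mul_zero] at this
  have hf_val : ∫ t in Ioi (0:ℝ), f t = b * b * ∫ u in Ioi (0:ℝ), F u := by
    have h1 := integral_comp_mul_left_Ioi f 0 hb
    rw [mul_zero] at h1
    rw [setIntegral_congr_fun measurableSet_Ioi hscale] at h1
    rw [MeasureTheory.integral_const_mul] at h1
    rw [smul_eq_mul] at h1
    have := h1.symm
    field_simp at this ⊢
    linarith [this]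
  refine ⟨hf_int, ?_⟩
  rw [show (∫ t in Ioi (0:ℝ), (1 - ((1 + (s/m) * t ^ (-α)) ^ m)⁻¹) * t) = ∫ t in Ioi (0:ℝ), f t from rfl]
  rw [hf_val, hFval]
  have hbb : b * b = c ^ δ := by
    rw [hbdef, ← Real.rpow_add hc, hδdef]
    congr 1
    field_simp
    norm_num
  rw [hbb]
  have hΓ : Real.Gamma (1 - δ) = -δ * Real.Gamma (-δ) := by
    rw [show (1:ℝ) - δ = -δ + 1 by ring, Real.Gamma_add_one (neg_ne_zero.mpr hδ0.ne')]
  rw [hΓ]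
  have hΓm : (0:ℝ) < Real.Gamma m := Real.Gamma_pos_of_pos (by exact_mod_cast hm)
  rw [hδdef]
  field_simp
end

section
/- Fix h > 0 and c > 0, and define P(λ) = 2πλ ∫_0^∞ exp(−πλ·(r² + h²)·c − πλ·r²) · r dr for λ > 0. Then P(λ) = exp(−πλ·h²·c)/(1 + c); in particular lim_{λ→0⁺} P(λ) = 1/(1+c), lim_{λ→∞} P(λ) = 0, and P is strictly decreasing in λ. -/
open Real MeasureTheory Set Filter

lemma integral_exp_neg_mul_sq_mul_Ioi {b : ℝ} (hb : 0 < b) :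
    ∫ r in Ioi (0:ℝ), Real.exp (-b * r ^ 2) * r = (2 * b)⁻¹ := by
  have A : ∀ x ∈ Ici (0:ℝ), HasDerivAt (fun x : ℝ => -(2 * b)⁻¹ * Real.exp (-b * x ^ 2))
      (Real.exp (-b * x ^ 2) * x) x := by
    intro x _
    refine (((hasDerivAt_pow 2 x).const_mul (-b)).exp.const_mul (-(2 * b)⁻¹)).congr_deriv ?_
    field_simp
    ring
  have B : Tendsto (fun y : ℝ => -(2 * b)⁻¹ * Real.exp (-b * y ^ 2)) atTop
      (nhds (-(2 * b)⁻¹ * 0)) := by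
    apply Tendsto.const_mul
    apply Real.tendsto_exp_atBot.comp
    have : Tendsto (fun y : ℝ => b * y ^ 2) atTop atTop :=
      (tendsto_pow_atTop two_ne_zero).const_mul_atTop hb
    simpa [neg_mul] using tendsto_neg_atBot_iff.2 this
  have key := integral_Ioi_of_hasDerivAt_of_tendsto
    (f := fun x : ℝ => -(2 * b)⁻¹ * Real.exp (-b * x ^ 2))
    (f' := fun x : ℝ => Real.exp (-b * x ^ 2) * x) (a := 0)
    (Continuous.continuousWithinAt (by continuity)) (fun x hx => A x (Set.mem_Ici.2 (le_of_lt hx))) ?_ B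
  · simpa using key
  · have := (integrable_mul_exp_neg_mul_sq hb).integrableOn (s := Ioi 0)
    exact this.congr_fun (fun x _ => by ring) measurableSet_Ioi

/-- Coverage probability with elevated BSs, closest association:
`P(λ) = 2πλ ∫_0^∞ e^{−πλ(r²+h²)c − πλr²} r dr = e^{−πλh²c}/(1+c)`,
with limits `1/(1+c)` as `λ → 0⁺` and `0` as `λ → ∞`, and strict monotone decrease. -/
theorem coverage_elevated_closest (h c : ℝ) (hh : 0 < h) (hc : 0 < c) :
    (∀ lam : ℝ, 0 < lam →
      2 * π * lam *
          ∫ r in Ioi (0:ℝ),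
            Real.exp (-(π * lam * (r ^ 2 + h ^ 2) * c) - π * lam * r ^ 2) * r =
        Real.exp (-(π * lam * h ^ 2 * c)) / (1 + c)) ∧
    Tendsto (fun lam : ℝ => Real.exp (-(π * lam * h ^ 2 * c)) / (1 + c))
      (nhdsWithin 0 (Ioi 0)) (nhds (1 / (1 + c))) ∧
    Tendsto (fun lam : ℝ => Real.exp (-(π * lam * h ^ 2 * c)) / (1 + c)) atTop (nhds 0) ∧
    StrictAntiOn (fun lam : ℝ => Real.exp (-(π * lam * h ^ 2 * c)) / (1 + c)) (Ioi 0) := by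
  have hc1 : (0:ℝ) < 1 + c := by linarith
  refine ⟨?_, ?_, ?_, ?_⟩
  · intro lam hlam
    have hb : 0 < π * lam * (1 + c) := by positivity
    have key : ∀ r : ℝ,
        Real.exp (-(π * lam * (r ^ 2 + h ^ 2) * c) - π * lam * r ^ 2) * r =
        Real.exp (-(π * lam * h ^ 2 * c)) * (Real.exp (-(π * lam * (1 + c)) * r ^ 2) * r) := by
      intro r
      rw [show -(π * lam * (r ^ 2 + h ^ 2) * c) - π * lam * r ^ 2 =
        (-(π * lam * h ^ 2 * c)) + (-(π * lam * (1 + c)) * r ^ 2) from by ring, Real.exp_add]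
      ring
    simp_rw [key]
    rw [MeasureTheory.integral_const_mul, integral_exp_neg_mul_sq_mul_Ioi hb]
    field_simp
  · have : ContinuousAt (fun lam : ℝ => Real.exp (-(π * lam * h ^ 2 * c)) / (1 + c)) 0 := by
      apply ContinuousAt.div_const
      exact (Real.continuous_exp.comp (by continuity)).continuousAt
    have := this.tendsto.mono_left (nhdsWithin_le_nhds (s := Ioi (0:ℝ)))
    simpa using this
  · have h1 : Tendsto (fun lam : ℝ => π * lam * h ^ 2 * c) atTop atTop := by
      have hpos : 0 < π * h ^ 2 * c := by positivity
      have := Tendsto.const_mul_atTop hpos (tendsto_id (α := ℝ) (x := atTop))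
      apply this.congr
      intro x; simp [id]; ring
    have h2 : Tendsto (fun lam : ℝ => Real.exp (-(π * lam * h ^ 2 * c))) atTop (nhds 0) :=
      Real.tendsto_exp_atBot.comp (tendsto_neg_atBot_iff.2 h1)
    simpa using h2.div_const (1 + c)
  · intro a _ b hb hab
    have : Real.exp (-(π * b * h ^ 2 * c)) < Real.exp (-(π * a * h ^ 2 * c)) := by
      apply Real.exp_lt_exp.2
      have : 0 < π * h ^ 2 * c := by positivity
      nlinarith
    exact (div_lt_div_iff_of_pos_right hc1).2 this
end

section
/- For θ > 0 and α = 4, the closed-form Nakagami-2 coverage probability for closest BS association, P₂(θ) = (A·(A·η − 1/2) − 1/2) / (A·η − 1/2)², where A = (3/2)(1+θ) and η = 1 + √θ·arctan(√θ), is strictly greater than the Rayleigh coverage probability P₁(θ) = 1/η. -/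
open Real

/-- Nakagami-2 beats Rayleigh for closest association, `α = 4`:
with `A = (3/2)(1+θ)` and `η = 1 + √θ arctan √θ`,
`(A(Aη − 1/2) − 1/2)/(Aη − 1/2)² > 1/η` for all `θ > 0`. -/
theorem nakagami2_coverage_gt_rayleigh (θ : ℝ) (hθ : 0 < θ) :
    ((3 / 2 * (1 + θ)) * ((3 / 2 * (1 + θ)) * (1 + Real.sqrt θ * Real.arctan (Real.sqrt θ))
        - 1 / 2) - 1 / 2) /
      ((3 / 2 * (1 + θ)) * (1 + Real.sqrt θ * Real.arctan (Real.sqrt θ)) - 1 / 2) ^ 2 >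
      1 / (1 + Real.sqrt θ * Real.arctan (Real.sqrt θ)) := by
  set s := Real.sqrt θ with hs
  have hs0 : 0 < s := Real.sqrt_pos.mpr hθ
  have hat : 0 < Real.arctan s := by simpa using Real.arctan_strictMono hs0
  set η : ℝ := 1 + s * Real.arctan s with hη
  have hη1 : 1 ≤ η := by nlinarith
  have hηpos : 0 < η := by linarith
  set A : ℝ := 3 / 2 * (1 + θ) with hA
  have hA1 : A ≥ 3 / 2 + 3 / 2 * θ := by rw [hA]; ring_nf; linarith
  have hx : A * η - 1 / 2 > η := by nlinarith
  have hxpos : 0 < A * η - 1 / 2 := by linarith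
  rw [gt_iff_lt, div_lt_div_iff₀ hηpos (by positivity)]
  nlinarith [sq_nonneg (A * η - 1 / 2 - η)]
end
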